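/- Characterization of exactness (corollary of Theorem 2.1): Assume ℓ_L < u_L and ℓ_R < u_R componentwise and let x* ∈ Ω (so in particular φ(x*) = 0). Then there exist multipliers y* making x* a strongly stationary point of the LCQP if and only if there exists ρ̄ > 0 such that for every ρ ≥ ρ̄ there exist multipliers (ȳ_A, ȳ_L, ȳ_R) making x* a KKT point of the penalized problem min_{x ∈ Ω̃} ψ_ρ(x). -/
import Mathlib


open Matrix
open scoped Classical

noncomputable section

structure LCQPData (n nA nc : ℕ) where
  Q : Matrix (Fin n) (Fin n) ℝ
  g : Fin n → ℝ
  A : Matrix (Fin nA) (Fin n) ℝ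
  lA : Fin nA → ℝ
  uA : Fin nA → ℝ
  L : Matrix (Fin nc) (Fin n) ℝ
  R : Matrix (Fin nc) (Fin n) ℝ
  lL : Fin nc → ℝ
  uL : Fin nc → ℝ
  lR : Fin nc → ℝ
  uR : Fin nc → ℝ

variable {n nA nc m : ℕ}

/-- Lower-active set of the constraint `l ≤ M x ≤ u`. -/
def actL (M : Matrix (Fin m) (Fin n) ℝ) (l u : Fin m → ℝ) (x : Fin n → ℝ) : Set (Fin m) :=
  {i | l i = M.mulVec x i ∧ M.mulVec x i < u i}

/-- Upper-active set of the constraint `l ≤ M x ≤ u`. -/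
def actU (M : Matrix (Fin m) (Fin n) ℝ) (l u : Fin m → ℝ) (x : Fin n → ℝ) : Set (Fin m) :=
  {i | l i < M.mulVec x i ∧ M.mulVec x i = u i}

/-- Free (inactive) set of the constraint `l ≤ M x ≤ u`. -/
def actF (M : Matrix (Fin m) (Fin n) ℝ) (l u : Fin m → ℝ) (x : Fin n → ℝ) : Set (Fin m) :=
  {i | l i < M.mulVec x i ∧ M.mulVec x i < u i}

/-- The relaxed feasible set Ω̃. -/
def LCQPData.relFeas (P : LCQPData n nA nc) : Set (Fin n → ℝ) :=
  {x | (∀ i, P.lA i ≤ P.A.mulVec x i ∧ P.A.mulVec x i ≤ P.uA i) ∧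
       (∀ i, P.lL i ≤ P.L.mulVec x i ∧ P.L.mulVec x i ≤ P.uL i) ∧
       (∀ i, P.lR i ≤ P.R.mulVec x i ∧ P.R.mulVec x i ≤ P.uR i)}

/-- The penalty function φ. -/
def LCQPData.phi (P : LCQPData n nA nc) (x : Fin n → ℝ) : ℝ :=
  (P.L.mulVec x - P.lL) ⬝ᵥ (P.R.mulVec x - P.lR)

/-- The LCQP feasible set Ω. -/
def LCQPData.feas (P : LCQPData n nA nc) : Set (Fin n → ℝ) :=
  {x ∈ P.relFeas | P.phi x = 0}

/-- ∇φ(x). -/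
def LCQPData.gradPhi (P : LCQPData n nA nc) (x : Fin n → ℝ) : Fin n → ℝ :=
  P.Lᵀ.mulVec (P.R.mulVec x - P.lR) + P.Rᵀ.mulVec (P.L.mulVec x - P.lL)

/-- The quadratic objective f. -/
def LCQPData.obj (P : LCQPData n nA nc) (x : Fin n → ℝ) : ℝ :=
  (1/2) * (x ⬝ᵥ P.Q.mulVec x) + P.g ⬝ᵥ x

/-- The penalized objective ψ_ρ. -/
def LCQPData.psi (P : LCQPData n nA nc) (ρ : ℝ) (x : Fin n → ℝ) : ℝ :=
  P.obj x + ρ * P.phi x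

/-- ∇ψ_ρ(x). -/
def LCQPData.gradPsi (P : LCQPData n nA nc) (ρ : ℝ) (x : Fin n → ℝ) : Fin n → ℝ :=
  P.Q.mulVec x + P.g + ρ • P.gradPhi x

/-- The convexified inner-loop model ϑ_{x̄,ρ}. -/
def LCQPData.theta (P : LCQPData n nA nc) (ρ : ℝ) (xb x : Fin n → ℝ) : ℝ :=
  (1/2) * (x ⬝ᵥ P.Q.mulVec x) + (P.g + ρ • P.gradPhi xb) ⬝ᵥ x

/-- Strong stationarity of the LCQP. -/
def LCQPData.StrongStat (P : LCQPData n nA nc) (x : Fin n → ℝ)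
    (yA : Fin nA → ℝ) (yL yR : Fin nc → ℝ) : Prop :=
  x ∈ P.feas ∧
  P.Q.mulVec x + P.g = P.Aᵀ.mulVec yA + P.Lᵀ.mulVec yL + P.Rᵀ.mulVec yR ∧
  (∀ i ∈ actF P.A P.lA P.uA x, yA i = 0) ∧
  (∀ i ∈ actL P.A P.lA P.uA x, 0 ≤ yA i) ∧
  (∀ i ∈ actU P.A P.lA P.uA x, yA i ≤ 0) ∧
  (∀ i ∈ actF P.L P.lL P.uL x, yL i = 0) ∧
  (∀ i ∈ actL P.L P.lL P.uL x ∩ actL P.R P.lR P.uR x, 0 ≤ yL i) ∧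
  (∀ i ∈ actU P.L P.lL P.uL x, yL i ≤ 0) ∧
  (∀ i ∈ actF P.R P.lR P.uR x, yR i = 0) ∧
  (∀ i ∈ actL P.L P.lL P.uL x ∩ actL P.R P.lR P.uR x, 0 ≤ yR i) ∧
  (∀ i ∈ actU P.R P.lR P.uR x, yR i ≤ 0)

/-- KKT point of the penalized problem min_{x ∈ Ω̃} ψ_ρ(x). -/
def LCQPData.PenKKT (P : LCQPData n nA nc) (ρ : ℝ) (x : Fin n → ℝ)
    (yA : Fin nA → ℝ) (yL yR : Fin nc → ℝ) : Prop :=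
  x ∈ P.relFeas ∧
  P.Q.mulVec x + P.g + ρ • P.gradPhi x
    = P.Aᵀ.mulVec yA + P.Lᵀ.mulVec yL + P.Rᵀ.mulVec yR ∧
  (∀ i ∈ actF P.A P.lA P.uA x, yA i = 0) ∧
  (∀ i ∈ actL P.A P.lA P.uA x, 0 ≤ yA i) ∧
  (∀ i ∈ actU P.A P.lA P.uA x, yA i ≤ 0) ∧
  (∀ i ∈ actF P.L P.lL P.uL x, yL i = 0) ∧
  (∀ i ∈ actL P.L P.lL P.uL x, 0 ≤ yL i) ∧
  (∀ i ∈ actU P.L P.lL P.uL x, yL i ≤ 0) ∧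
  (∀ i ∈ actF P.R P.lR P.uR x, yR i = 0) ∧
  (∀ i ∈ actL P.R P.lR P.uR x, 0 ≤ yR i) ∧
  (∀ i ∈ actU P.R P.lR P.uR x, yR i ≤ 0)


private lemma vec_nonneg_compl {k : ℕ} (a b : Fin k → ℝ) (ha : ∀ i, 0 ≤ a i)
    (hb : ∀ i, 0 ≤ b i) (h : ∑ j, a j * b j = 0) (i : Fin k) : a i = 0 ∨ b i = 0 := by
  have h0 := (Finset.sum_eq_zero_iff_of_nonneg
    (fun j _ => mul_nonneg (ha j) (hb j))).1 h i (Finset.mem_univ i)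
  exact mul_eq_zero.1 h0

/-- Characterization of exactness (corollary of Theorem 2.1). -/
theorem exact_penalty_characterization (n nA nc : ℕ) (P : LCQPData n nA nc)
    (hQ : P.Q.PosDef)
    (hLbnd : ∀ i, P.lL i < P.uL i) (hRbnd : ∀ i, P.lR i < P.uR i)
    (xs : Fin n → ℝ) (hxs : xs ∈ P.feas) :
    (∃ yA yL yR, P.StrongStat xs yA yL yR) ↔
      (∃ ρbar > (0:ℝ), ∀ ρ ≥ ρbar, ∃ ybA ybL ybR, P.PenKKT ρ xs ybA ybL ybR) := by
  obtain ⟨hrel, hphi⟩ := hxs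
  have hvL0 : ∀ i, 0 ≤ (P.L.mulVec xs - P.lL) i := fun i => by
    have := (hrel.2.1 i).1; simp only [Pi.sub_apply, sub_nonneg]; exact this
  have hvR0 : ∀ i, 0 ≤ (P.R.mulVec xs - P.lR) i := fun i => by
    have := (hrel.2.2 i).1; simp only [Pi.sub_apply, sub_nonneg]; exact this
  have hsum : ∑ j, (P.L.mulVec xs - P.lL) j * (P.R.mulVec xs - P.lR) j = 0 := by
    simpa [LCQPData.phi, dotProduct] using hphi
  have hcomp := vec_nonneg_compl _ _ hvL0 hvR0 hsum
  have hgrad : ∀ (ρ : ℝ) (yL yR : Fin nc → ℝ),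
      P.Lᵀ.mulVec (yL + ρ • (P.R.mulVec xs - P.lR))
        + P.Rᵀ.mulVec (yR + ρ • (P.L.mulVec xs - P.lL))
      = P.Lᵀ.mulVec yL + P.Rᵀ.mulVec yR + ρ • P.gradPhi xs := by
    intro ρ yL yR
    simp only [LCQPData.gradPhi, Matrix.mulVec_add, Matrix.mulVec_smul, smul_add]
    abel
  constructor
  · rintro ⟨yA, yL, yR, _, heq, hAf, hAl, hAu, hLf, hLl, hLu, hRf, hRl, hRu⟩
    set cL : Fin nc → ℝ := fun i => max (-yL i / (P.R.mulVec xs - P.lR) i) 0 with hcL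
    set cR : Fin nc → ℝ := fun i => max (-yR i / (P.L.mulVec xs - P.lL) i) 0 with hcR
    have hsumnn : 0 ≤ ∑ j, (cL j + cR j) :=
      Finset.sum_nonneg fun j _ => add_nonneg (le_max_right _ _) (le_max_right _ _)
    refine ⟨1 + ∑ j, (cL j + cR j), by linarith, ?_⟩
    intro ρ hρ
    have hρ0 : (0:ℝ) < ρ := by linarith
    have hbound : ∀ i, cL i + cR i ≤ ∑ j, (cL j + cR j) :=
      fun i => Finset.single_le_sum (f := fun j => cL j + cR j)
        (fun j _ => add_nonneg (le_max_right _ _) (le_max_right _ _)) (Finset.mem_univ i)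
    refine ⟨yA, yL + ρ • (P.R.mulVec xs - P.lR), yR + ρ • (P.L.mulVec xs - P.lL),
      hrel, ?_, hAf, hAl, hAu, ?_, ?_, ?_, ?_, ?_, ?_⟩
    · conv_rhs => rw [add_assoc, hgrad]
      rw [heq]; abel
    · -- L free
      intro i hi
      have hvL : (0:ℝ) < (P.L.mulVec xs - P.lL) i := by
        simp only [Pi.sub_apply, sub_pos]; exact hi.1
      have hvR : (P.R.mulVec xs - P.lR) i = 0 := (hcomp i).resolve_left (ne_of_gt hvL)
      simp [hLf i hi, hvR]
    · -- L lower
      intro i hi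
      have hvL : (P.L.mulVec xs - P.lL) i = 0 := by
        simp only [Pi.sub_apply, sub_eq_zero]; exact hi.1.symm
      by_cases hvR : (P.R.mulVec xs - P.lR) i = 0
      · have hiR : i ∈ actL P.R P.lR P.uR xs := by
          have hR : P.R.mulVec xs i = P.lR i := by
            have := hvR; simp only [Pi.sub_apply, sub_eq_zero] at this; exact this
          exact ⟨hR.symm, hR ▸ hRbnd i⟩
        have := hLl i ⟨hi, hiR⟩
        have hr := hvR0 i
        simp only [Pi.add_apply, Pi.smul_apply, smul_eq_mul]
        nlinarith
      · have hpos : (0:ℝ) < (P.R.mulVec xs - P.lR) i :=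
          lt_of_le_of_ne (hvR0 i) (Ne.symm hvR)
        have h1 : -yL i / (P.R.mulVec xs - P.lR) i ≤ ρ := by
          have h2 := le_max_left (-yL i / (P.R.mulVec xs - P.lR) i) (0:ℝ)
          have h3 := le_max_right (-yR i / (P.L.mulVec xs - P.lL) i) (0:ℝ)
          have h4 := hbound i
          simp only [hcL, hcR] at h4 ⊢
          linarith
        have h5 := (div_le_iff₀ hpos).1 h1
        simp only [Pi.add_apply, Pi.smul_apply, smul_eq_mul]
        linarith
    · -- L upper
      intro i hi
      have hvL : (0:ℝ) < (P.L.mulVec xs - P.lL) i := by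
        simp only [Pi.sub_apply, sub_pos]; exact hi.1
      have hvR : (P.R.mulVec xs - P.lR) i = 0 := (hcomp i).resolve_left (ne_of_gt hvL)
      have := hLu i hi
      simp only [Pi.add_apply, Pi.smul_apply, smul_eq_mul, hvR, mul_zero, add_zero]
      exact this
    · -- R free
      intro i hi
      have hvR : (0:ℝ) < (P.R.mulVec xs - P.lR) i := by
        simp only [Pi.sub_apply, sub_pos]; exact hi.1
      have hvL : (P.L.mulVec xs - P.lL) i = 0 := (hcomp i).resolve_right (ne_of_gt hvR)
      simp [hRf i hi, hvL]
    · -- R lower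
      intro i hi
      have hvR : (P.R.mulVec xs - P.lR) i = 0 := by
        simp only [Pi.sub_apply, sub_eq_zero]; exact hi.1.symm
      by_cases hvL : (P.L.mulVec xs - P.lL) i = 0
      · have hiL : i ∈ actL P.L P.lL P.uL xs := by
          have hL : P.L.mulVec xs i = P.lL i := by
            have := hvL; simp only [Pi.sub_apply, sub_eq_zero] at this; exact this
          exact ⟨hL.symm, hL ▸ hLbnd i⟩
        have := hRl i ⟨hiL, hi⟩
        have hr := hvL0 i
        simp only [Pi.add_apply, Pi.smul_apply, smul_eq_mul]
        nlinarith
      · have hpos : (0:ℝ) < (P.L.mulVec xs - P.lL) i :=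
          lt_of_le_of_ne (hvL0 i) (Ne.symm hvL)
        have h1 : -yR i / (P.L.mulVec xs - P.lL) i ≤ ρ := by
          have h2 := le_max_left (-yR i / (P.L.mulVec xs - P.lL) i) (0:ℝ)
          have h3 := le_max_right (-yL i / (P.R.mulVec xs - P.lR) i) (0:ℝ)
          have h4 := hbound i
          simp only [hcL, hcR] at h4 ⊢
          linarith
        have h5 := (div_le_iff₀ hpos).1 h1
        simp only [Pi.add_apply, Pi.smul_apply, smul_eq_mul]
        linarith
    · -- R upper
      intro i hi
      have hvR : (0:ℝ) < (P.R.mulVec xs - P.lR) i := by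
        simp only [Pi.sub_apply, sub_pos]; exact hi.1
      have hvL : (P.L.mulVec xs - P.lL) i = 0 := (hcomp i).resolve_right (ne_of_gt hvR)
      have := hRu i hi
      simp only [Pi.add_apply, Pi.smul_apply, smul_eq_mul, hvL, mul_zero, add_zero]
      exact this
  · rintro ⟨ρbar, hρpos, h⟩
    obtain ⟨ybA, ybL, ybR, _, heq, hAf, hAl, hAu, hLf, hLl, hLu, hRf, hRl, hRu⟩ :=
      h ρbar le_rfl
    refine ⟨ybA, ybL - ρbar • (P.R.mulVec xs - P.lR), ybR - ρbar • (P.L.mulVec xs - P.lL),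
      ⟨hrel, hphi⟩, ?_, hAf, hAl, hAu, ?_, ?_, ?_, ?_, ?_, ?_⟩
    · have key : P.Lᵀ.mulVec (ybL - ρbar • (P.R.mulVec xs - P.lR))
          + P.Rᵀ.mulVec (ybR - ρbar • (P.L.mulVec xs - P.lL))
          = P.Lᵀ.mulVec ybL + P.Rᵀ.mulVec ybR - ρbar • P.gradPhi xs := by
        simp only [LCQPData.gradPhi, Matrix.mulVec_sub, Matrix.mulVec_smul, smul_add]
        abel
      have h2 : P.Q.mulVec xs + P.g
          = (P.Aᵀ.mulVec ybA + P.Lᵀ.mulVec ybL + P.Rᵀ.mulVec ybR) - ρbar • P.gradPhi xs := by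
        rw [← heq]; abel
      conv_rhs => rw [add_assoc, key]
      rw [h2]; abel
    · -- L free
      intro i hi
      have hvL : (0:ℝ) < (P.L.mulVec xs - P.lL) i := by
        simp only [Pi.sub_apply, sub_pos]; exact hi.1
      have hvR : (P.R.mulVec xs - P.lR) i = 0 := (hcomp i).resolve_left (ne_of_gt hvL)
      simp [hLf i hi, hvR]
    · -- L lower on W^l
      rintro i ⟨hiL, hiR⟩
      have hvR : (P.R.mulVec xs - P.lR) i = 0 := by
        simp only [Pi.sub_apply, sub_eq_zero]; exact hiR.1.symm
      have := hLl i hiL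
      simp only [Pi.sub_apply, Pi.smul_apply, smul_eq_mul, hvR, mul_zero, sub_zero]
      exact this
    · -- L upper
      intro i hi
      have hvL : (0:ℝ) < (P.L.mulVec xs - P.lL) i := by
        simp only [Pi.sub_apply, sub_pos]; exact hi.1
      have hvR : (P.R.mulVec xs - P.lR) i = 0 := (hcomp i).resolve_left (ne_of_gt hvL)
      have := hLu i hi
      simp only [Pi.sub_apply, Pi.smul_apply, smul_eq_mul, hvR, mul_zero, sub_zero]
      exact this
    · -- R free
      intro i hi
      have hvR : (0:ℝ) < (P.R.mulVec xs - P.lR) i := by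
        simp only [Pi.sub_apply, sub_pos]; exact hi.1
      have hvL : (P.L.mulVec xs - P.lL) i = 0 := (hcomp i).resolve_right (ne_of_gt hvR)
      simp [hRf i hi, hvL]
    · -- R lower on W^l
      rintro i ⟨hiL, hiR⟩
      have hvL : (P.L.mulVec xs - P.lL) i = 0 := by
        simp only [Pi.sub_apply, sub_eq_zero]; exact hiL.1.symm
      have := hRl i hiR
      simp only [Pi.sub_apply, Pi.smul_apply, smul_eq_mul, hvL, mul_zero, sub_zero]
      exact this
    · -- R upper
      intro i hi
      have hvR : (0:ℝ) < (P.R.mulVec xs - P.lR) i := by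
        simp only [Pi.sub_apply, sub_pos]; exact hi.1
      have hvL : (P.L.mulVec xs - P.lL) i = 0 := (hcomp i).resolve_right (ne_of_gt hvR)
      have := hRu i hi
      simp only [Pi.sub_apply, Pi.smul_apply, smul_eq_mul, hvL, mul_zero, sub_zero]
      exact this
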